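/- Let $\alpha(q) = \partial_2 A_2(q)$ where $A_2(q_1,q_2) = \int_0^{q_1} B(s,q_2)\,ds$ (extended to complex $q_1$ in the strip $U_r$). Suppose $|\partial_2 B(q_1,q_2)| \le \frac{(1-\varepsilon)b_0}{2r}$ on $U_r \times \mathbb{R}$, $\partial_2 B$ real on the real axis, and $\mathrm{Re}\, B \ge (1-\varepsilon)b_0$ on $U_r \times \mathbb{R}$. Then $|\mathrm{Im}\, \alpha(q)| < \frac{(1-\varepsilon)b_0}{2}$ for all $q \in U_r \times \mathbb{R}$, and consequently $\mathrm{Re}\,(B + i\alpha) \ge \frac{(1-\varepsilon)b_0}{2} > 0$ on $U_r \times \mathbb{R}$. -/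

import Mathlib

open intervalIntegral Metric Set MeasureTheory

lemma stmt3_stepA (r : ℝ) (hr : 0 < r) (B : ℂ → ℝ → ℂ)
    (hhol : ∀ q2 : ℝ, DifferentiableOn ℂ (fun q1 => B q1 q2) {z : ℂ | |z.im| < r})
    (hcont : Continuous fun p : ℂ × ℝ => B p.1 p.2)
    (q2 : ℝ) (z : ℂ) (hz : |z.im| < r) :
    HasDerivAt (fun w : ℂ => w * ∫ t in (0:ℝ)..1, B ((t : ℂ) * w) q2) (B z q2) z := by
  set S : Set ℂ := {z : ℂ | |z.im| < r} with hSdef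
  have hSo : IsOpen S := isOpen_lt (continuous_abs.comp Complex.continuous_im) continuous_const
  set B' : ℂ → ℂ := deriv (fun w => B w q2) with hB'def
  have hB'c : ContinuousOn B' S := (((hhol q2).analyticOnNhd hSo).deriv).continuousOn
  have hBd : ∀ u ∈ S, HasDerivAt (fun w => B w q2) (B' u) u := fun u hu =>
    ((hhol q2).differentiableAt (hSo.mem_nhds hu)).hasDerivAt
  have hBc : ∀ w : ℂ, Continuous fun t : ℝ => B ((t : ℂ) * w) q2 := fun w =>
    (hcont.comp (continuous_id.prodMk continuous_const)).comp
      (Complex.continuous_ofReal.mul continuous_const)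
  set δ : ℝ := (r - |z.im|) / 2 with hδdef
  have hδ : 0 < δ := by simp only [hδdef]; linarith
  have hmem : ∀ w ∈ closedBall z δ, ∀ t ∈ Icc (0:ℝ) 1, ((t:ℂ) * w) ∈ S := by
    intro w hw t ht
    have hd : |w.im - z.im| ≤ δ := by
      have h := Complex.abs_im_le_norm (w - z)
      rw [mem_closedBall, dist_eq_norm] at hw
      simpa using h.trans hw
    have h1 : |w.im| < r := by
      have h2 : |w.im| ≤ |w.im - z.im| + |z.im| := by
        calc |w.im| = |(w.im - z.im) + z.im| := by ring_nf
        _ ≤ _ := abs_add_le _ _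
      rw [hδdef] at hd; linarith
    have h3 : |((t:ℂ)*w).im| ≤ |w.im| := by
      have he : ((t:ℂ)*w).im = t * w.im := by simp [Complex.mul_im]
      rw [he, abs_mul]
      exact mul_le_of_le_one_left (abs_nonneg _) (abs_le.mpr ⟨by linarith [ht.1], ht.2⟩)
    exact lt_of_le_of_lt h3 h1
  have hzS : z ∈ S := hz
  have hzb : z ∈ closedBall z δ := mem_closedBall_self hδ.le
  -- bound for B' on a compact set
  have hKc : IsCompact ((fun p : ℝ × ℂ => (p.1 : ℂ) * p.2) '' (Icc (0:ℝ) 1 ×ˢ closedBall z δ)) :=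
    (isCompact_Icc.prod (isCompact_closedBall z δ)).image
      ((Complex.continuous_ofReal.comp continuous_fst).mul continuous_snd)
  have hKS : (fun p : ℝ × ℂ => (p.1 : ℂ) * p.2) '' (Icc (0:ℝ) 1 ×ˢ closedBall z δ) ⊆ S := by
    rintro _ ⟨⟨t, w⟩, ⟨ht, hw⟩, rfl⟩
    exact hmem w hw t ht
  obtain ⟨C, hC⟩ := hKc.exists_bound_of_continuousOn (hB'c.mono hKS)
  have hCb : ∀ t ∈ Icc (0:ℝ) 1, ∀ w ∈ closedBall z δ, ‖B' ((t:ℂ)*w)‖ ≤ C := by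
    intro t ht w hw
    exact hC _ ⟨(t, w), ⟨ht, hw⟩, rfl⟩
  have hIoc : Set.uIoc (0:ℝ) 1 ⊆ Icc (0:ℝ) 1 := by
    rw [Set.uIoc_of_le zero_le_one]; exact Ioc_subset_Icc_self
  -- derivative of the integral w.r.t. the parameter w
  have key := intervalIntegral.hasDerivAt_integral_of_dominated_loc_of_deriv_le
    (F := fun w t => B ((t:ℂ)*w) q2) (F' := fun w t => B' ((t:ℂ)*w) * (t:ℂ))
    (x₀ := z) (bound := fun _ => C) (a := 0) (b := 1) (μ := volume) (ball_mem_nhds z hδ)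
    (Filter.Eventually.of_forall fun w => (hBc w).aestronglyMeasurable)
    ((hBc z).intervalIntegrable 0 1)
    (by
      apply ContinuousOn.aestronglyMeasurable _ measurableSet_uIoc
      apply ContinuousOn.mul _ (Complex.continuous_ofReal.continuousOn)
      exact hB'c.comp ((Complex.continuous_ofReal.mul continuous_const).continuousOn)
        (fun t ht => hmem z hzb t (hIoc ht)))
    (Filter.Eventually.of_forall fun t ht w hw => by
      have h1 : ‖B' ((t:ℂ)*w)‖ ≤ C := hCb t (hIoc ht) w (ball_subset_closedBall hw)
      have h2 : ‖((t:ℂ))‖ ≤ 1 := by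
        rw [Complex.norm_real, Real.norm_eq_abs]
        have := hIoc ht
        exact abs_le.mpr ⟨by linarith [this.1], this.2⟩
      calc ‖B' ((t:ℂ)*w) * (t:ℂ)‖ = ‖B' ((t:ℂ)*w)‖ * ‖((t:ℂ))‖ := norm_mul _ _
      _ ≤ C * 1 := mul_le_mul h1 h2 (norm_nonneg _) ((norm_nonneg _).trans h1)
      _ = C := mul_one C)
    (intervalIntegrable_const)
    (Filter.Eventually.of_forall fun t ht w hw => by
      have hin : HasDerivAt (fun y : ℂ => (t:ℂ) * y) (t:ℂ) w := by
        simpa using (hasDerivAt_id w).const_mul (t:ℂ)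
      exact HasDerivAt.comp w
        (hBd _ (hmem w (ball_subset_closedBall hw) t (hIoc ht))) hin)
  have hint : HasDerivAt (fun w : ℂ => ∫ t in (0:ℝ)..1, B ((t:ℂ)*w) q2)
      (∫ t in (0:ℝ)..1, B' ((t:ℂ)*z) * (t:ℂ)) z := key.2
  have hprod := (hasDerivAt_id z).mul hint
  -- FTC computation of the derivative value
  have hmemz : ∀ t ∈ Icc (0:ℝ) 1, ((t:ℂ) * z) ∈ S := fun t ht => hmem z hzb t ht
  have hB'cz : ContinuousOn (fun t : ℝ => B' ((t:ℂ)*z)) (Icc (0:ℝ) 1) :=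
    hB'c.comp ((Complex.continuous_ofReal.mul continuous_const).continuousOn) hmemz
  have hderiv : ∀ t ∈ uIcc (0:ℝ) 1,
      HasDerivAt (fun t : ℝ => (t:ℂ) * B ((t:ℂ)*z) q2)
        (B ((t:ℂ)*z) q2 + (t:ℂ) * (B' ((t:ℂ)*z) * z)) t := by
    intro t ht
    rw [uIcc_of_le zero_le_one] at ht
    have h1 : HasDerivAt (fun t : ℝ => (t:ℂ)) 1 t := by
      simpa using (hasDerivAt_id t).ofReal_comp
    have houter : HasDerivAt (fun w : ℂ => B (w*z) q2) (B' ((t:ℂ)*z) * z) (t:ℂ) :=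
      HasDerivAt.comp (t:ℂ) (hBd _ (hmemz t ht)) (hasDerivAt_mul_const z)
    have h2 : HasDerivAt (fun t : ℝ => B ((t:ℂ)*z) q2) (B' ((t:ℂ)*z) * z) t :=
      houter.comp_ofReal
    have h3 := h1.mul h2
    simp only [one_mul] at h3
    exact h3
  have hi1 : IntervalIntegrable (fun t : ℝ => B ((t:ℂ)*z) q2) volume 0 1 :=
    (hBc z).intervalIntegrable 0 1
  have hi2 : IntervalIntegrable (fun t : ℝ => (t:ℂ) * (B' ((t:ℂ)*z) * z)) volume 0 1 := by
    apply ContinuousOn.intervalIntegrable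
    rw [uIcc_of_le zero_le_one]
    exact (Complex.continuous_ofReal.continuousOn).mul (hB'cz.mul continuousOn_const)
  have ftc : ∫ t in (0:ℝ)..1, (B ((t:ℂ)*z) q2 + (t:ℂ) * (B' ((t:ℂ)*z) * z))
      = B z q2 := by
    rw [intervalIntegral.integral_eq_sub_of_hasDerivAt hderiv (hi1.add hi2)]
    norm_num
  have hEq : (1 : ℂ) * (∫ t in (0:ℝ)..1, B ((t:ℂ)*z) q2)
      + z * ∫ t in (0:ℝ)..1, B' ((t:ℂ)*z) * (t:ℂ) = B z q2 := by
    rw [one_mul, ← ftc, intervalIntegral.integral_add hi1 hi2]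
    congr 1
    have hfe : (fun t : ℝ => (t:ℂ) * (B' ((t:ℂ)*z) * z))
        = fun t : ℝ => z * (B' ((t:ℂ)*z) * (t:ℂ)) := funext fun t => by ring
    rw [hfe, intervalIntegral.integral_const_mul]
  exact hEq ▸ hprod

/-- Bound on `Im α` where `α = ∂₂ A₂`, `A₂(q1,q2) = ∫_{[0,q1]} B(s,q2) ds`,
and positivity of `Re (B + i α)`. -/
theorem stmt_3 (r b0 ε : ℝ) (hr : 0 < r) (hb0 : 0 < b0) (hε : ε ∈ Set.Ioo (0 : ℝ) 1)
    (B : ℂ → ℝ → ℂ)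
    (hhol : ∀ q2 : ℝ, DifferentiableOn ℂ (fun q1 => B q1 q2) {z : ℂ | |z.im| < r})
    (hcont : Continuous fun p : ℂ × ℝ => B p.1 p.2)
    (hcontd : Continuous fun p : ℂ × ℝ => deriv (fun s : ℝ => B p.1 s) p.2)
    (hd2 : ∀ q1 : ℂ, |q1.im| < r → ∀ q2 : ℝ, DifferentiableAt ℝ (fun s : ℝ => B q1 s) q2)
    (hrealB : ∀ x : ℝ, ∀ q2 : ℝ, (B (x : ℂ) q2).im = 0)
    (hreald2 : ∀ x : ℝ, ∀ q2 : ℝ, (deriv (fun s : ℝ => B (x : ℂ) s) q2).im = 0)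
    (hbound : ∀ q1 : ℂ, |q1.im| < r → ∀ q2 : ℝ,
      ‖deriv (fun s : ℝ => B q1 s) q2‖ ≤ (1 - ε) * b0 / (2 * r))
    (hRe : ∀ q1 : ℂ, |q1.im| < r → ∀ q2 : ℝ, (1 - ε) * b0 ≤ (B q1 q2).re)
    (A2 : ℂ → ℝ → ℂ)
    (hA2 : ∀ q1 : ℂ, ∀ q2 : ℝ, A2 q1 q2 = q1 * ∫ t in (0:ℝ)..1, B ((t : ℂ) * q1) q2)
    (α : ℂ → ℝ → ℂ)
    (hα : ∀ q1 : ℂ, ∀ q2 : ℝ, α q1 q2 = deriv (fun s : ℝ => A2 q1 s) q2) :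
    ∀ q1 : ℂ, |q1.im| < r → ∀ q2 : ℝ,
      |(α q1 q2).im| < (1 - ε) * b0 / 2 ∧
        (1 - ε) * b0 / 2 ≤ (B q1 q2 + Complex.I * α q1 q2).re := by
  obtain ⟨hε0, hε1⟩ := hε
  have hε1' : 0 < 1 - ε := by linarith
  set M : ℝ := (1 - ε) * b0 / (2 * r) with hMdef
  have hM0 : 0 < M := by positivity
  set D : ℂ → ℝ → ℂ := fun z s => deriv (fun u : ℝ => B z u) s with hDdef
  have hDcont : Continuous fun p : ℂ × ℝ => D p.1 p.2 := hcontd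
  intro q1 hq1 q2
  set x : ℝ := q1.re with hxdef
  set y : ℝ := q1.im with hydef
  -- membership facts
  have habs : ∀ s : ℝ, s ∈ Set.uIoc (0:ℝ) y → |s| ≤ |y| := by
    intro s hs
    rcases Set.mem_uIoc.mp hs with h | h
    · exact abs_le.mpr ⟨by linarith [neg_abs_le y, abs_nonneg y, h.1], by linarith [le_abs_self y, abs_nonneg y, h.2]⟩
    · exact abs_le.mpr ⟨by linarith [neg_abs_le y, abs_nonneg y, h.1], by linarith [le_abs_self y, abs_nonneg y, h.2]⟩
  have hvert : ∀ s : ℝ, |s| ≤ |y| → |((x:ℂ) + (s:ℂ) * Complex.I).im| < r := by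
    intro s hs
    have : ((x:ℂ) + (s:ℂ) * Complex.I).im = s := by simp
    rw [this]; exact lt_of_le_of_lt hs hq1
  have hmemt : ∀ t : ℝ, t ∈ Set.uIoc (0:ℝ) 1 → |((t:ℂ) * q1).im| < r := by
    intro t ht
    have h1 : ((t:ℂ) * q1).im = t * q1.im := by simp [Complex.mul_im]
    rw [h1, abs_mul]
    have ht' : t ∈ Set.Ioc (0:ℝ) 1 := by rwa [Set.uIoc_of_le zero_le_one] at ht
    calc |t| * |q1.im| ≤ 1 * |q1.im| := by
          apply mul_le_mul_of_nonneg_right _ (abs_nonneg _)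
          exact abs_le.mpr ⟨by linarith [ht'.1], ht'.2⟩
      _ < r := by rw [one_mul]; exact hq1
  -- Step B : the imaginary part of A2 along the vertical segment
  have keyIm : ∀ u : ℝ, (A2 q1 u).im
      = ∫ s in (0:ℝ)..y, (B ((x:ℂ) + (s:ℂ) * Complex.I) u).re := by
    intro u
    have hψ : ∀ s ∈ uIcc (0:ℝ) y,
        HasDerivAt (fun s : ℝ => (A2 ((x:ℂ) + (s:ℂ) * Complex.I) u).im)
          ((B ((x:ℂ) + (s:ℂ) * Complex.I) u).re) s := by
      intro s hs
      have hsy : |s| ≤ |y| := by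
        rcases Set.mem_uIcc.mp hs with h | h
        · exact abs_le.mpr ⟨by linarith [neg_abs_le y, abs_nonneg y, h.1], by linarith [le_abs_self y, abs_nonneg y, h.2]⟩
        · exact abs_le.mpr ⟨by linarith [neg_abs_le y, abs_nonneg y, h.1], by linarith [le_abs_self y, abs_nonneg y, h.2]⟩
      have hmem := hvert s hsy
      have hA := stmt3_stepA r hr B hhol hcont u ((x:ℂ) + (s:ℂ) * Complex.I) hmem
      have hcurve : HasDerivAt (fun w : ℂ => (x:ℂ) + w * Complex.I) Complex.I ((s:ℂ)) := by
        simpa using (hasDerivAt_mul_const (Complex.I)).const_add (x:ℂ)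
      have hcomp := (HasDerivAt.comp ((s:ℂ)) hA hcurve).comp_ofReal
      have hfun : (fun s : ℝ => A2 ((x:ℂ) + (s:ℂ) * Complex.I) u)
          = fun s : ℝ => ((x:ℂ) + (s:ℂ) * Complex.I)
              * ∫ t in (0:ℝ)..1, B ((t:ℂ) * ((x:ℂ) + (s:ℂ) * Complex.I)) u :=
        funext fun s => hA2 _ u
      have hAc : HasDerivAt (fun s : ℝ => A2 ((x:ℂ) + (s:ℂ) * Complex.I) u)
          (B ((x:ℂ) + (s:ℂ) * Complex.I) u * Complex.I) s := by
        rw [hfun]; exact hcomp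
      have := Complex.imCLM.hasFDerivAt.comp_hasDerivAt s hAc
      simpa [Function.comp_def] using this
    have hcontRe : Continuous fun s : ℝ => (B ((x:ℂ) + (s:ℂ) * Complex.I) u).re :=
      Complex.continuous_re.comp (hcont.comp
        (((continuous_const.add (Complex.continuous_ofReal.mul continuous_const))).prodMk
          continuous_const))
    have hftc := intervalIntegral.integral_eq_sub_of_hasDerivAt hψ
      (hcontRe.intervalIntegrable 0 y)
    have h0 : (A2 ((x:ℂ) + ((0:ℝ):ℂ) * Complex.I) u).im = 0 := by
      have hx0 : (x:ℂ) + ((0:ℝ):ℂ) * Complex.I = (x:ℂ) := by simp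
      rw [hx0, hA2]
      have hfe : (fun t : ℝ => B ((t:ℂ) * (x:ℂ)) u)
          = fun t : ℝ => (((B (((t * x : ℝ)):ℂ) u).re : ℝ) : ℂ) := by
        funext t
        have hc : ((t:ℂ) * (x:ℂ)) = (((t * x : ℝ)) : ℂ) := by push_cast; ring
        rw [hc]
        exact Complex.ext (by simp) (by rw [Complex.ofReal_im]; exact hrealB (t * x) u)
      rw [hfe, intervalIntegral.integral_ofReal]
      simp [← Complex.ofReal_mul]
    have hq1e : (x:ℂ) + ((y:ℝ):ℂ) * Complex.I = q1 := Complex.re_add_im q1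
    rw [hq1e, h0, sub_zero] at hftc
    exact hftc.symm
  -- Step C : value of α
  have hA2u : HasDerivAt (fun u : ℝ => A2 q1 u)
      (q1 * ∫ t in (0:ℝ)..1, D ((t:ℂ) * q1) q2) q2 := by
    have hfun : (fun u : ℝ => A2 q1 u)
        = fun u : ℝ => q1 * ∫ t in (0:ℝ)..1, B ((t:ℂ) * q1) u := funext fun u => hA2 q1 u
    rw [hfun]
    have hBtu : ∀ u : ℝ, Continuous fun t : ℝ => B ((t:ℂ) * q1) u := fun u =>
      hcont.comp ((Complex.continuous_ofReal.mul continuous_const).prodMk continuous_const)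
    have hkey := intervalIntegral.hasDerivAt_integral_of_dominated_loc_of_deriv_le
      (F := fun u t => B ((t:ℂ) * q1) u) (F' := fun u t => D ((t:ℂ) * q1) u)
      (x₀ := q2) (bound := fun _ => M) (a := 0) (b := 1) (μ := volume) (ball_mem_nhds q2 one_pos)
      (Filter.Eventually.of_forall fun u => (hBtu u).aestronglyMeasurable)
      ((hBtu q2).intervalIntegrable 0 1)
      ((hDcont.comp ((Complex.continuous_ofReal.mul continuous_const).prodMk
        continuous_const)).aestronglyMeasurable)
      (Filter.Eventually.of_forall fun t ht u _ => by
        simpa [hDdef] using hbound ((t:ℂ) * q1) (hmemt t ht) u)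
      intervalIntegrable_const
      (Filter.Eventually.of_forall fun t ht u _ =>
        (hd2 ((t:ℂ) * q1) (hmemt t ht) u).hasDerivAt)
    exact (hkey.2).const_mul q1
  have hαv : α q1 q2 = q1 * ∫ t in (0:ℝ)..1, D ((t:ℂ) * q1) q2 := by
    rw [hα]; exact hA2u.deriv
  have him : HasDerivAt (fun u : ℝ => (A2 q1 u).im) ((α q1 q2).im) q2 := by
    have := Complex.imCLM.hasFDerivAt.comp_hasDerivAt q2 hA2u
    rw [hαv]
    simpa [Function.comp_def] using this
  have him2 : HasDerivAt (fun u : ℝ => (A2 q1 u).im)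
      (∫ s in (0:ℝ)..y, (D ((x:ℂ) + (s:ℂ) * Complex.I) q2).re) q2 := by
    have hfun : (fun u : ℝ => (A2 q1 u).im)
        = fun u : ℝ => ∫ s in (0:ℝ)..y, (B ((x:ℂ) + (s:ℂ) * Complex.I) u).re :=
      funext keyIm
    rw [hfun]
    have hBs : ∀ u : ℝ, Continuous fun s : ℝ => (B ((x:ℂ) + (s:ℂ) * Complex.I) u).re := fun u =>
      Complex.continuous_re.comp (hcont.comp
        ((continuous_const.add (Complex.continuous_ofReal.mul continuous_const)).prodMk
          continuous_const))
    have hDs : Continuous fun s : ℝ => (D ((x:ℂ) + (s:ℂ) * Complex.I) q2).re :=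
      Complex.continuous_re.comp (hDcont.comp
        ((continuous_const.add (Complex.continuous_ofReal.mul continuous_const)).prodMk
          continuous_const))
    have hkey := intervalIntegral.hasDerivAt_integral_of_dominated_loc_of_deriv_le
      (F := fun u s => (B ((x:ℂ) + (s:ℂ) * Complex.I) u).re)
      (F' := fun u s => (D ((x:ℂ) + (s:ℂ) * Complex.I) u).re)
      (x₀ := q2) (bound := fun _ => M) (a := 0) (b := y) (μ := volume) (ball_mem_nhds q2 one_pos)
      (Filter.Eventually.of_forall fun u => (hBs u).aestronglyMeasurable)
      ((hBs q2).intervalIntegrable 0 y)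
      (hDs.aestronglyMeasurable)
      (Filter.Eventually.of_forall fun s hs u _ => by
        have h1 := hbound ((x:ℂ) + (s:ℂ) * Complex.I) (hvert s (habs s hs)) u
        have h2 := Complex.abs_re_le_norm (D ((x:ℂ) + (s:ℂ) * Complex.I) u)
        simpa [Real.norm_eq_abs] using h2.trans h1)
      intervalIntegrable_const
      (Filter.Eventually.of_forall fun s hs u _ => by
        have := (hd2 ((x:ℂ) + (s:ℂ) * Complex.I) (hvert s (habs s hs)) u).hasDerivAt
        simpa [Function.comp_def] using Complex.reCLM.hasFDerivAt.comp_hasDerivAt u this)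
    exact hkey.2
  have hαim : (α q1 q2).im = ∫ s in (0:ℝ)..y, (D ((x:ℂ) + (s:ℂ) * Complex.I) q2).re :=
    him.unique him2
  -- final bounds
  have hb1 : |(α q1 q2).im| ≤ M * |y - 0| := by
    rw [hαim]
    have := intervalIntegral.norm_integral_le_of_norm_le_const
      (f := fun s : ℝ => (D ((x:ℂ) + (s:ℂ) * Complex.I) q2).re) (a := 0) (b := y) (C := M)
      (fun s hs => by
        have h1 := hbound ((x:ℂ) + (s:ℂ) * Complex.I) (hvert s (habs s hs)) q2
        have h2 := Complex.abs_re_le_norm (D ((x:ℂ) + (s:ℂ) * Complex.I) q2)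
        simpa [Real.norm_eq_abs] using h2.trans h1)
    simpa [Real.norm_eq_abs] using this
  have hb2 : |(α q1 q2).im| < (1 - ε) * b0 / 2 := by
    have h3 : M * |y - 0| < M * r := by
      apply mul_lt_mul_of_pos_left _ hM0
      simpa using hq1
    have h4 : M * r = (1 - ε) * b0 / 2 := by
      rw [hMdef]; field_simp
    linarith
  refine ⟨hb2, ?_⟩
  have h5 : (B q1 q2 + Complex.I * α q1 q2).re = (B q1 q2).re - (α q1 q2).im := by
    simp [Complex.add_re, Complex.mul_re]
    ring
  rw [h5]
  have h6 := hRe q1 hq1 q2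
  have h7 : (α q1 q2).im ≤ |(α q1 q2).im| := le_abs_self _
  linarith
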